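/- Let V ⊂ ℙ³ be the smooth quartic surface defined by c₁·t₁·F̃(x₁,t₁) = c₂·t₂·F̃(x₂,t₂), where F̃(x,t) = x³+Axt²+Bt³ has distinct roots and c₁, c₂ are nonzero constants. Then every line contained in V is either (1) one of the 16 lines given by (x₁:t₁) ∈ Z and (x₂:t₂) ∈ Z, where Z ⊂ ℙ¹ is the common zero set of t·F̃(x,t) (four points), or (2) one of the 4 lines of the form (x₂:t₂) = ψ(x₁:t₁) for ψ a Möbius transformation of ℙ¹ with ψ(Z) = Z satisfying the compatibility with c₁, c₂. -/

import Mathlib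

/-- `Φ(v) = t·F̃(x,t)` for `v = (x, t)`, where `F̃(x,t) = x³ + Axt² + Bt³`. -/
def Phi {F : Type*} [Field F] (A B : F) (v : Fin 2 → F) : F :=
  v 1 * ((v 0) ^ 3 + A * (v 0) * (v 1) ^ 2 + B * (v 1) ^ 3)


lemma key_lemma {F : Type*} [Field F] [CharZero F] (A B c₂ : F) (hc₂ : c₂ ≠ 0) (k γ δ : F)
    (h : ∀ x y : F, c₂ * Phi A B ![x, y] = k * (γ * x + δ * y) ^ 4) : False := by
  have hPhi : ∀ x y : F, Phi A B ![x, y] = y * (x ^ 3 + A * x * y ^ 2 + B * y ^ 3) := by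
    intro x y; simp [Phi]
  obtain ⟨C, hC⟩ : ∃ C : F, ∀ x : F, c₂ * (x ^ 3 + A * x + B) = C := by
    by_cases hk : k = 0
    · refine ⟨0, fun x => ?_⟩
      have hx := h x 1
      rw [hPhi, hk] at hx
      linear_combination hx
    · have h10 := h 1 0
      rw [hPhi] at h10
      have hγ4 : k * γ ^ 4 = 0 := by linear_combination -h10
      have hγ : γ = 0 := by
        rcases mul_eq_zero.mp hγ4 with h' | h'
        · exact absurd h' hk
        · exact pow_eq_zero_iff (by norm_num) |>.mp h'
      refine ⟨k * δ ^ 4, fun x => ?_⟩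
      have hx := h x 1
      rw [hPhi, hγ] at hx
      linear_combination hx
  have h0 := hC 0
  have h1 := hC 1
  have h2 := hC 2
  have e1 : c₂ * (1 + A) = 0 := by linear_combination h1 - h0
  have e2 : c₂ * (8 + 2 * A) = 0 := by linear_combination h2 - h0
  have h6 : (6 : F) * c₂ = 0 := by linear_combination e2 - 2 * e1
  rcases mul_eq_zero.mp h6 with h' | h'
  · exact absurd h' (by norm_num)
  · exact hc₂ h'

lemma dep_lemma {F : Type*} [Field F] (p0 p1 q0 q1 : F) (h : p0 * q1 - p1 * q0 = 0) :
    ∃ a0 a1 α β : F, (a0 ≠ 0 ∨ a1 ≠ 0) ∧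
      p0 = α * a0 ∧ p1 = α * a1 ∧ q0 = β * a0 ∧ q1 = β * a1 := by
  by_cases h0 : p0 ≠ 0
  · refine ⟨p0, p1, 1, q0 / p0, Or.inl h0, by ring, by ring, by field_simp, ?_⟩
    field_simp
    linear_combination h
  · push_neg at h0
    by_cases h1 : p1 ≠ 0
    · refine ⟨p0, p1, 1, q1 / p1, Or.inr h1, by ring, by ring, ?_, by field_simp⟩
      field_simp
      linear_combination -h
    · push_neg at h1
      by_cases h2 : q0 ≠ 0
      · exact ⟨q0, q1, 0, 1, Or.inl h2, by simp [h0], by simp [h1], by ring, by ring⟩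
      · push_neg at h2
        by_cases h3 : q1 ≠ 0
        · exact ⟨q0, q1, 0, 1, Or.inr h3, by simp [h0], by simp [h1], by ring, by ring⟩
        · push_neg at h3
          exact ⟨1, 0, 0, 0, Or.inl one_ne_zero, by simp [h0], by simp [h1],
            by simp [h2], by simp [h3]⟩

lemma no_degenerate {F : Type*} [Field F] [CharZero F] (A B c₁ c₂ : F) (hc₂ : c₂ ≠ 0)
    (p0 p1 q0 q1 r0 r1 w0 w1 : F)
    (hd1 : p0 * q1 - p1 * q0 = 0) (hd2 : r0 * w1 - r1 * w0 ≠ 0)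
    (h : ∀ σ τ : F, c₁ * Phi A B ![σ * p0 + τ * q0, σ * p1 + τ * q1]
        = c₂ * Phi A B ![σ * r0 + τ * w0, σ * r1 + τ * w1]) : False := by
  obtain ⟨a0, a1, α, β, _, hp0, hp1, hq0, hq1⟩ := dep_lemma p0 p1 q0 q1 hd1
  set d := r0 * w1 - r1 * w0 with hd
  apply key_lemma A B c₂ hc₂ (c₁ * Phi A B ![a0, a1]) ((α * w1 - β * r1) / d) ((β * r0 - α * w0) / d)
  intro x y
  have hστ := h ((w1 * x - w0 * y) / d) ((r0 * y - r1 * x) / d)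
  have e2 : (w1 * x - w0 * y) / d * r0 + (r0 * y - r1 * x) / d * w0 = x := by
    field_simp; ring
  have e3 : (w1 * x - w0 * y) / d * r1 + (r0 * y - r1 * x) / d * w1 = y := by
    field_simp; ring
  have e0 : (w1 * x - w0 * y) / d * p0 + (r0 * y - r1 * x) / d * q0
      = ((α * w1 - β * r1) / d * x + (β * r0 - α * w0) / d * y) * a0 := by
    rw [hp0, hq0]; field_simp; ring
  have e1 : (w1 * x - w0 * y) / d * p1 + (r0 * y - r1 * x) / d * q1
      = ((α * w1 - β * r1) / d * x + (β * r0 - α * w0) / d * y) * a1 := by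
    rw [hp1, hq1]; field_simp; ring
  rw [e0, e1, e2, e3] at hστ
  have hom : Phi A B ![((α * w1 - β * r1) / d * x + (β * r0 - α * w0) / d * y) * a0,
      ((α * w1 - β * r1) / d * x + (β * r0 - α * w0) / d * y) * a1]
      = ((α * w1 - β * r1) / d * x + (β * r0 - α * w0) / d * y) ^ 4 * Phi A B ![a0, a1] := by
    simp only [Phi, Matrix.cons_val_zero, Matrix.cons_val_one, Matrix.head_cons]; ring
  rw [hom] at hστ
  linear_combination -hστ

lemma phi_zero_aux {F : Type*} [Field F] (A B c₁ c₂ : F) (hc₁ : c₁ ≠ 0)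
    (α β α' β' a0 a1 b0 b1 : F)
    (hind : ∀ σ τ : F, σ * α + τ * β = 0 → σ * α' + τ * β' = 0 → σ = 0 ∧ τ = 0)
    (h : ∀ σ τ : F, c₁ * Phi A B ![(σ * α + τ * β) * a0, (σ * α + τ * β) * a1]
        = c₂ * Phi A B ![(σ * α' + τ * β') * b0, (σ * α' + τ * β') * b1]) :
    Phi A B ![a0, a1] = 0 := by
  obtain ⟨σ, τ, hne, hk⟩ : ∃ σ τ : F, ¬(σ = 0 ∧ τ = 0) ∧ σ * α' + τ * β' = 0 := by
    by_cases h' : α' = 0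
    · exact ⟨1, 0, by simp, by simp [h']⟩
    · exact ⟨β', -α', by simp [h'], by ring⟩
  have hs : σ * α + τ * β ≠ 0 := fun h0 => hne (hind σ τ h0 hk)
  have hh := h σ τ
  rw [hk] at hh
  have hz : Phi A B ![(0 : F) * b0, 0 * b1] = 0 := by simp [Phi]
  rw [hz, mul_zero] at hh
  have hom : Phi A B ![(σ * α + τ * β) * a0, (σ * α + τ * β) * a1]
      = (σ * α + τ * β) ^ 4 * Phi A B ![a0, a1] := by
    simp only [Phi, Matrix.cons_val_zero, Matrix.cons_val_one, Matrix.head_cons]; ring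
  rw [hom] at hh
  rcases mul_eq_zero.mp hh with h' | h'
  · exact absurd h' hc₁
  · rcases mul_eq_zero.mp h' with h'' | h''
    · exact absurd h'' (pow_ne_zero _ hs)
    · exact h''



/-- Classification of lines on the smooth quartic surface
`c₁·t₁·F̃(x₁,t₁) = c₂·t₂·F̃(x₂,t₂)` in `ℙ³` (Boissière–Sarti): every line (2-dimensional
subspace of `F⁴`, coordinates `(x₁, x₂, t₁, t₂)`) contained in the surface is either one of the
lines joining a zero `(x₁:t₁)` of `t F̃` to a zero `(x₂:t₂)` of `t F̃`, or a line of the form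
`(x₂:t₂) = ψ(x₁:t₁)` for a Möbius transformation `ψ` of `ℙ¹` preserving the zero set,
compatible with `c₁, c₂` in the sense that `c₁Φ = c₂(Φ ∘ ψ)`. -/
theorem lines_on_quartic_surface {F : Type*} [Field F] [IsAlgClosed F] [CharZero F]
    (A B c₁ c₂ : F) (hΔ : 4 * A ^ 3 + 27 * B ^ 2 ≠ 0) (hc₁ : c₁ ≠ 0) (hc₂ : c₂ ≠ 0)
    (L : Submodule F (Fin 4 → F)) (hrank : Module.finrank F L = 2)
    (hLV : ∀ u ∈ L, c₁ * Phi A B ![u 0, u 2] = c₂ * Phi A B ![u 1, u 3]) :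
    (∃ a b : Fin 2 → F, a ≠ 0 ∧ b ≠ 0 ∧ Phi A B a = 0 ∧ Phi A B b = 0 ∧
      (L : Set (Fin 4 → F)) = {u | ∃ s t : F, u = ![s * a 0, t * b 0, s * a 1, t * b 1]}) ∨
    (∃ M : Matrix (Fin 2) (Fin 2) F, IsUnit M.det ∧
      (∀ v : Fin 2 → F, Phi A B v = 0 → Phi A B (M.mulVec v) = 0) ∧
      (∀ v : Fin 2 → F, c₁ * Phi A B v = c₂ * Phi A B (M.mulVec v)) ∧
      (L : Set (Fin 4 → F))
        = {u | ∃ v : Fin 2 → F, u = ![v 0, M.mulVec v 0, v 1, M.mulVec v 1]}) := by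
  have bL : Module.Basis (Fin 2) F L := Module.finBasisOfFinrankEq F L hrank
  set e : Fin 4 → F := (bL 0 : Fin 4 → F) with he_def
  set f : Fin 4 → F := (bL 1 : Fin 4 → F) with hf_def
  -- membership and representation
  have hmem : ∀ σ τ : F, σ • e + τ • f ∈ L := fun σ τ =>
    L.add_mem (L.smul_mem σ (bL 0).2) (L.smul_mem τ (bL 1).2)
  have hrep : ∀ u, u ∈ L → ∃ σ τ : F, u = σ • e + τ • f := by
    intro u hu
    refine ⟨bL.repr ⟨u, hu⟩ 0, bL.repr ⟨u, hu⟩ 1, ?_⟩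
    have h := bL.sum_repr ⟨u, hu⟩
    rw [Fin.sum_univ_two] at h
    have h2 := congrArg (Subtype.val) h
    push_cast at h2
    exact h2.symm
  -- independence
  have hindep : ∀ σ τ : F, σ • e + τ • f = 0 → σ = 0 ∧ τ = 0 := by
    intro σ τ h0
    have hli : LinearIndependent F (fun i : Fin 2 => ((bL i : L) : Fin 4 → F)) :=
      bL.linearIndependent.map' L.subtype L.ker_subtype
    have hsum : ∑ i : Fin 2, ![σ, τ] i • ((bL i : L) : Fin 4 → F) = 0 := by
      rw [Fin.sum_univ_two]
      show σ • e + τ • f = 0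
      exact h0
    have hz := Fintype.linearIndependent_iff.mp hli ![σ, τ] hsum
    exact ⟨hz 0, hz 1⟩
  set p0 := e 0 with hp0_def
  set r0 := e 1 with hr0_def
  set p1 := e 2 with hp1_def
  set r1 := e 3 with hr1_def
  set q0 := f 0 with hq0_def
  set w0 := f 1 with hw0_def
  set q1 := f 2 with hq1_def
  set w1 := f 3 with hw1_def
  have hστ : ∀ σ τ : F, c₁ * Phi A B ![σ * p0 + τ * q0, σ * p1 + τ * q1]
      = c₂ * Phi A B ![σ * r0 + τ * w0, σ * r1 + τ * w1] := by
    intro σ τ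
    have h := hLV (σ • e + τ • f) (hmem σ τ)
    have h02 : ![(σ • e + τ • f) 0, (σ • e + τ • f) 2] = ![σ * p0 + τ * q0, σ * p1 + τ * q1] := by
      funext i; fin_cases i <;> simp [hp0_def, hp1_def, hq0_def, hq1_def]
    have h13 : ![(σ • e + τ • f) 1, (σ • e + τ • f) 3] = ![σ * r0 + τ * w0, σ * r1 + τ * w1] := by
      funext i; fin_cases i <;> simp [hr0_def, hr1_def, hw0_def, hw1_def]
    rw [h02, h13] at h
    exact h
  clear_value p0 r0 p1 r1 q0 w0 q1 w1 e f
  by_cases hd1 : p0 * q1 - p1 * q0 = 0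
  · -- first alternative
    have hd2 : r0 * w1 - r1 * w0 = 0 := by
      by_contra hd2
      exact no_degenerate A B c₁ c₂ hc₂ p0 p1 q0 q1 r0 r1 w0 w1 hd1 hd2 hστ
    obtain ⟨a0, a1, α, β, ha, hpa0, hpa1, hqa0, hqa1⟩ := dep_lemma p0 p1 q0 q1 hd1
    obtain ⟨b0, b1, α', β', hb, hrb0, hrb1, hwb0, hwb1⟩ := dep_lemma r0 r1 w0 w1 hd2
    have he0 : e 0 = α * a0 := hp0_def ▸ hpa0
    have he1 : e 1 = α' * b0 := hr0_def ▸ hrb0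
    have he2 : e 2 = α * a1 := hp1_def ▸ hpa1
    have he3 : e 3 = α' * b1 := hr1_def ▸ hrb1
    have hf0 : f 0 = β * a0 := hq0_def ▸ hqa0
    have hf1 : f 1 = β' * b0 := hw0_def ▸ hwb0
    have hf2 : f 2 = β * a1 := hq1_def ▸ hqa1
    have hf3 : f 3 = β' * b1 := hw1_def ▸ hwb1
    have hind2 : ∀ σ τ : F, σ * α + τ * β = 0 → σ * α' + τ * β' = 0 → σ = 0 ∧ τ = 0 := by
      intro σ τ h1 h2
      apply hindep σ τ
      funext i
      fin_cases i
      · show σ * e 0 + τ * f 0 = 0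
        rw [he0, hf0]; linear_combination a0 * h1
      · show σ * e 1 + τ * f 1 = 0
        rw [he1, hf1]; linear_combination b0 * h2
      · show σ * e 2 + τ * f 2 = 0
        rw [he2, hf2]; linear_combination a1 * h1
      · show σ * e 3 + τ * f 3 = 0
        rw [he3, hf3]; linear_combination b1 * h2
    have hστ' : ∀ σ τ : F, c₁ * Phi A B ![(σ * α + τ * β) * a0, (σ * α + τ * β) * a1]
        = c₂ * Phi A B ![(σ * α' + τ * β') * b0, (σ * α' + τ * β') * b1] := by
      intro σ τ
      have h := hστ σ τ
      have g0 : σ * p0 + τ * q0 = (σ * α + τ * β) * a0 := by rw [hpa0, hqa0]; ring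
      have g1 : σ * p1 + τ * q1 = (σ * α + τ * β) * a1 := by rw [hpa1, hqa1]; ring
      have g2 : σ * r0 + τ * w0 = (σ * α' + τ * β') * b0 := by rw [hrb0, hwb0]; ring
      have g3 : σ * r1 + τ * w1 = (σ * α' + τ * β') * b1 := by rw [hrb1, hwb1]; ring
      rw [g0, g1, g2, g3] at h
      exact h
    have hΦa : Phi A B ![a0, a1] = 0 :=
      phi_zero_aux A B c₁ c₂ hc₁ α β α' β' a0 a1 b0 b1 hind2 hστ'
    have hΦb : Phi A B ![b0, b1] = 0 :=
      phi_zero_aux A B c₂ c₁ hc₂ α' β' α β b0 b1 a0 a1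
        (fun σ τ h1 h2 => hind2 σ τ h2 h1) (fun σ τ => (hστ' σ τ).symm)
    have hD : α * β' - α' * β ≠ 0 := by
      intro hD0
      obtain ⟨σ, τ, hne, hk1, hk2⟩ : ∃ σ τ : F, ¬(σ = 0 ∧ τ = 0) ∧
          σ * α + τ * β = 0 ∧ σ * α' + τ * β' = 0 := by
        by_cases hβ : β = 0 ∧ α = 0
        · by_cases hβ' : β' = 0 ∧ α' = 0
          · exact ⟨1, 0, by simp, by simp [hβ.1, hβ.2], by simp [hβ'.1, hβ'.2]⟩
          · refine ⟨β', -α', ?_, by linear_combination hD0, by ring⟩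
            simp only [neg_eq_zero]; exact hβ'
        · refine ⟨β, -α, ?_, by ring, by linear_combination -hD0⟩
          simp only [neg_eq_zero]; exact hβ
      exact hne (hind2 σ τ hk1 hk2)
    left
    refine ⟨![a0, a1], ![b0, b1], ?_, ?_, hΦa, hΦb, ?_⟩
    · intro h
      rcases ha with h' | h'
      · exact h' (congrFun h 0)
      · exact h' (congrFun h 1)
    · intro h
      rcases hb with h' | h'
      · exact h' (congrFun h 0)
      · exact h' (congrFun h 1)
    · ext u
      simp only [SetLike.mem_coe, Set.mem_setOf_eq, Matrix.cons_val_zero, Matrix.cons_val_one,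
        Matrix.head_cons]
      constructor
      · rintro hu
        obtain ⟨σ, τ, rfl⟩ := hrep u hu
        refine ⟨σ * α + τ * β, σ * α' + τ * β', ?_⟩
        funext i
        fin_cases i
        · show σ * e 0 + τ * f 0 = (σ * α + τ * β) * a0
          rw [he0, hf0]; ring
        · show σ * e 1 + τ * f 1 = (σ * α' + τ * β') * b0
          rw [he1, hf1]; ring
        · show σ * e 2 + τ * f 2 = (σ * α + τ * β) * a1
          rw [he2, hf2]; ring
        · show σ * e 3 + τ * f 3 = (σ * α' + τ * β') * b1
          rw [he3, hf3]; ring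
      · rintro ⟨s, t, rfl⟩
        have heq : (![s * a0, t * b0, s * a1, t * b1] : Fin 4 → F)
            = ((s * β' - t * β) / (α * β' - α' * β)) • e
              + ((t * α - s * α') / (α * β' - α' * β)) • f := by
          funext i
          fin_cases i
          · show s * a0 = (s * β' - t * β) / (α * β' - α' * β) * e 0
                + (t * α - s * α') / (α * β' - α' * β) * f 0
            rw [he0, hf0, div_mul_eq_mul_div, div_mul_eq_mul_div, ← add_div, eq_div_iff hD]; ring
          · show t * b0 = (s * β' - t * β) / (α * β' - α' * β) * e 1
                + (t * α - s * α') / (α * β' - α' * β) * f 1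
            rw [he1, hf1, div_mul_eq_mul_div, div_mul_eq_mul_div, ← add_div, eq_div_iff hD]; ring
          · show s * a1 = (s * β' - t * β) / (α * β' - α' * β) * e 2
                + (t * α - s * α') / (α * β' - α' * β) * f 2
            rw [he2, hf2, div_mul_eq_mul_div, div_mul_eq_mul_div, ← add_div, eq_div_iff hD]; ring
          · show t * b1 = (s * β' - t * β) / (α * β' - α' * β) * e 3
                + (t * α - s * α') / (α * β' - α' * β) * f 3
            rw [he3, hf3, div_mul_eq_mul_div, div_mul_eq_mul_div, ← add_div, eq_div_iff hD]; ring
        rw [heq]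
        exact hmem _ _
  · -- second alternative: π₁ nondegenerate, so π₂ must be too
    by_cases hd2 : r0 * w1 - r1 * w0 = 0
    · exact absurd (no_degenerate A B c₂ c₁ hc₁ r0 r1 w0 w1 p0 p1 q0 q1 hd2 hd1
        (fun σ τ => (hστ σ τ).symm)) not_false
    set d := p0 * q1 - p1 * q0 with hd_def
    have hd1' : p0 * q1 - p1 * q0 ≠ 0 := hd1
    set M : Matrix (Fin 2) (Fin 2) F :=
      !![(r0 * q1 - w0 * p1) / d, (w0 * p0 - r0 * q0) / d;
         (r1 * q1 - w1 * p1) / d, (w1 * p0 - r1 * q0) / d] with hM_def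
    have hmv : ∀ v : Fin 2 → F, M.mulVec v
        = ![(r0 * q1 - w0 * p1) / d * v 0 + (w0 * p0 - r0 * q0) / d * v 1,
            (r1 * q1 - w1 * p1) / d * v 0 + (w1 * p0 - r1 * q0) / d * v 1] := by
      intro v
      funext i
      fin_cases i <;>
        simp [hM_def, Matrix.mulVec, dotProduct, Fin.sum_univ_two]
    have hMpq : ∀ σ τ : F, M.mulVec ![σ * p0 + τ * q0, σ * p1 + τ * q1]
        = ![σ * r0 + τ * w0, σ * r1 + τ * w1] := by
      intro σ τ
      rw [hmv]
      funext i
      fin_cases i <;>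
        (simp only [Fin.zero_eta, Fin.mk_one, Matrix.cons_val_zero, Matrix.cons_val_one,
           Matrix.head_cons, hd_def]
         rw [div_mul_eq_mul_div, div_mul_eq_mul_div, ← add_div, div_eq_iff hd1']
         ring)
    have hsur : ∀ v : Fin 2 → F, ∃ σ τ : F,
        ![σ * p0 + τ * q0, σ * p1 + τ * q1] = v := by
      intro v
      refine ⟨(q1 * v 0 - q0 * v 1) / d, (p0 * v 1 - p1 * v 0) / d, ?_⟩
      funext i
      fin_cases i <;>
        (simp only [Fin.zero_eta, Fin.mk_one, Matrix.cons_val_zero, Matrix.cons_val_one,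
           Matrix.head_cons, hd_def]
         rw [div_mul_eq_mul_div, div_mul_eq_mul_div, ← add_div, div_eq_iff hd1']
         ring)
    have hmain : ∀ v : Fin 2 → F, c₁ * Phi A B v = c₂ * Phi A B (M.mulVec v) := by
      intro v
      obtain ⟨σ, τ, hv⟩ := hsur v
      rw [← hv, hMpq]
      exact hστ σ τ
    right
    refine ⟨M, ?_, ?_, hmain, ?_⟩
    · have : M.det = (r0 * w1 - r1 * w0) / d := by
        rw [hM_def, Matrix.det_fin_two_of]
        field_simp
        ring
      rw [this]
      exact isUnit_iff_ne_zero.mpr (div_ne_zero hd2 hd1)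
    · intro v hv0
      have h := hmain v
      rw [hv0, mul_zero] at h
      rcases mul_eq_zero.mp h.symm with h' | h'
      · exact absurd h' hc₂
      · exact h'
    · ext u
      simp only [SetLike.mem_coe, Set.mem_setOf_eq]
      constructor
      · intro hu
        obtain ⟨σ, τ, rfl⟩ := hrep u hu
        refine ⟨![σ * p0 + τ * q0, σ * p1 + τ * q1], ?_⟩
        rw [hMpq]
        funext i
        fin_cases i
        · show σ * e 0 + τ * f 0 = σ * p0 + τ * q0
          rw [hp0_def, hq0_def]
        · show σ * e 1 + τ * f 1 = σ * r0 + τ * w0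
          rw [hr0_def, hw0_def]
        · show σ * e 2 + τ * f 2 = σ * p1 + τ * q1
          rw [hp1_def, hq1_def]
        · show σ * e 3 + τ * f 3 = σ * r1 + τ * w1
          rw [hr1_def, hw1_def]
      · rintro ⟨v, rfl⟩
        obtain ⟨σ, τ, hv⟩ := hsur v
        have heq : (![v 0, M.mulVec v 0, v 1, M.mulVec v 1] : Fin 4 → F) = σ • e + τ • f := by
          rw [← hv, hMpq]
          funext i
          fin_cases i
          · show σ * p0 + τ * q0 = σ * e 0 + τ * f 0
            rw [hp0_def, hq0_def]
          · show σ * r0 + τ * w0 = σ * e 1 + τ * f 1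
            rw [hr0_def, hw0_def]
          · show σ * p1 + τ * q1 = σ * e 2 + τ * f 2
            rw [hp1_def, hq1_def]
          · show σ * r1 + τ * w1 = σ * e 3 + τ * f 3
            rw [hr1_def, hw1_def]
        rw [heq]
        exact hmem σ τ
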